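/- (Symmetry extension lemma.) Let H and L be linear subspaces of R^n such that H ∩ L^⊥ = {0} and dim H < dim L. If E ⊆ S^{n−1} is nonempty, closed, invariant under the reflection R_H, and invariant under every element of O(n)_{L^⊥} (the orthogonal transformations fixing L^⊥ pointwise), then E is invariant under every element of O(n)_{(H+L)^⊥}. -/

import Mathlib

open Submodule Metric Filter Function

set_option linter.unusedSectionVars false

noncomputable section SymmExtAux

variable {V : Type*} [NormedAddCommGroup V] [InnerProductSpace ℝ V] [FiniteDimensional ℝ V]

local notation "⟪" x ", " y "⟫" => @inner ℝ _ _ x y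

/-- Ambient-valued orthogonal projection. -/
noncomputable def pj (K : Submodule ℝ V) (x : V) : V := (orthogonalProjection K x : V)

lemma pj_mem (K : Submodule ℝ V) (x : V) : pj K x ∈ K := (orthogonalProjection K x).2

lemma pj_of_mem {K : Submodule ℝ V} {x : V} (h : x ∈ K) : pj K x = x := by
  simpa [pj] using starProjection_eq_self_iff.2 h

lemma pj_of_mem_orth {K : Submodule ℝ V} {x : V} (h : x ∈ Kᗮ) : pj K x = 0 := by
  simp [pj, orthogonalProjectionOnto_apply_of_mem_orthogonal h]

lemma pj_add (K : Submodule ℝ V) (x y : V) : pj K (x + y) = pj K x + pj K y := by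
  simp [pj, map_add]

lemma pj_smul (K : Submodule ℝ V) (r : ℝ) (x : V) : pj K (r • x) = r • pj K x := by
  simp [pj, map_smul]

lemma pj_sub (K : Submodule ℝ V) (x y : V) : pj K (x - y) = pj K x - pj K y := by
  simp [pj, map_sub]

lemma pj_neg (K : Submodule ℝ V) (x : V) : pj K (-x) = -pj K x := by
  simp [pj, map_neg]

lemma pj_zero (K : Submodule ℝ V) : pj K 0 = 0 := by simp [pj]

lemma inner_sub_pj (K : Submodule ℝ V) (x : V) {w : V} (hw : w ∈ K) :
    ⟪x - pj K x, w⟫ = 0 := starProjection_inner_eq_zero x w hw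

lemma pj_eq_of {K : Submodule ℝ V} {u v : V} (hvm : v ∈ K)
    (hvo : ∀ w ∈ K, ⟪u - v, w⟫ = 0) : pj K u = v :=
  eq_starProjection_of_mem_of_inner_eq_zero hvm hvo

lemma pj_norm_le (K : Submodule ℝ V) (x : V) : ‖pj K x‖ ≤ ‖x‖ := by
  have h1 : ⟪x - pj K x, pj K x⟫ = 0 := inner_sub_pj K x (pj_mem K x)
  have h2 : ‖(x - pj K x) + pj K x‖ ^ 2 = ‖x - pj K x‖ ^ 2 + 2 * ⟪x - pj K x, pj K x⟫ + ‖pj K x‖ ^ 2 :=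
    norm_add_sq_real _ _
  rw [sub_add_cancel] at h2
  nlinarith [norm_nonneg (pj K x), norm_nonneg x, norm_nonneg (x - pj K x),
    sq_nonneg (‖pj K x‖ - ‖x‖), sq_nonneg (‖pj K x‖ + ‖x‖)]

lemma mem_orth_of_pj_eq_zero {K : Submodule ℝ V} {x : V} (h : pj K x = 0) : x ∈ Kᗮ := by
  have h2 := sub_starProjection_mem_orthogonal (K := K) x
  have h3 : K.starProjection x = pj K x := rfl
  rw [h3, h, sub_zero] at h2
  exact h2

lemma pj_norm_lt (K : Submodule ℝ V) {x : V} (hx : x ∉ K) : ‖pj K x‖ < ‖x‖ := by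
  have h1 : ⟪x - pj K x, pj K x⟫ = 0 := inner_sub_pj K x (pj_mem K x)
  have h2 : ‖(x - pj K x) + pj K x‖ ^ 2 = ‖x - pj K x‖ ^ 2 + 2 * ⟪x - pj K x, pj K x⟫ + ‖pj K x‖ ^ 2 :=
    norm_add_sq_real _ _
  rw [sub_add_cancel] at h2
  have h3 : x - pj K x ≠ 0 := by
    intro h
    rw [sub_eq_zero] at h
    exact hx (h ▸ pj_mem K x)
  have h4 : 0 < ‖x - pj K x‖ := norm_pos_iff.2 h3
  nlinarith [norm_nonneg (pj K x), norm_nonneg x,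
    sq_nonneg (‖pj K x‖ - ‖x‖), sq_nonneg (‖pj K x‖ + ‖x‖)]


section Geometry

variable (H L : Submodule ℝ V)

lemma Lorth_eq : Lᗮ = ((H ⊔ L) ⊓ Lᗮ) ⊔ (H ⊔ L)ᗮ := by
  have h1 : (H ⊔ L)ᗮ ≤ Lᗮ := Submodule.orthogonal_le le_sup_right
  have h2 : (Lᗮ ⊓ (H ⊔ L)) ⊔ (H ⊔ L)ᗮ = Lᗮ ⊓ ((H ⊔ L) ⊔ (H ⊔ L)ᗮ) :=
    inf_sup_assoc_of_le _ h1
  rw [Submodule.sup_orthogonal_of_hasOrthogonalProjection, inf_top_eq] at h2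
  rw [inf_comm] at h2
  exact h2.symm

lemma mem_U_inf_Horth {u : V} (hu : u ∈ (H ⊔ L) ⊓ Lᗮ) (hu' : u ∈ Hᗮ) : u = 0 := by
  have h1 : u ∈ (H ⊔ L)ᗮ := by
    rw [← Submodule.inf_orthogonal]
    exact ⟨hu', hu.2⟩
  have h2 : u ∈ (H ⊔ L) ⊓ (H ⊔ L)ᗮ := ⟨hu.1, h1⟩
  rw [Submodule.inf_orthogonal_eq_bot] at h2
  simpa using h2

lemma W_inf_Uorth : (H ⊔ L) ⊓ ((H ⊔ L) ⊓ Lᗮ)ᗮ = L := by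
  apply le_antisymm
  · intro x hx
    have : x ∈ Lᗮᗮ := by
      intro ξ hξ
      rw [Lorth_eq H L] at hξ
      obtain ⟨ξ₁, hξ₁, ξ₂, hξ₂, rfl⟩ := Submodule.mem_sup.1 hξ
      have e1 : ⟪ξ₁, x⟫ = 0 := hx.2 ξ₁ hξ₁
      have e2 : ⟪ξ₂, x⟫ = 0 := by
        rw [real_inner_comm]
        exact Submodule.inner_right_of_mem_orthogonal hx.1 hξ₂
      rw [inner_add_left, e1, e2, add_zero]
    rwa [Submodule.orthogonal_orthogonal] at this
  · refine le_inf le_sup_right ?_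
    exact le_trans (Submodule.le_orthogonal_orthogonal L)
      (Submodule.orthogonal_le inf_le_right)

lemma decompW {w : V} (hw : w ∈ H ⊔ L) : w - pj ((H ⊔ L) ⊓ Lᗮ) w ∈ L := by
  have h1 : w - pj ((H ⊔ L) ⊓ Lᗮ) w ∈ (H ⊔ L) ⊓ ((H ⊔ L) ⊓ Lᗮ)ᗮ := by
    constructor
    · exact Submodule.sub_mem _ hw ((inf_le_left : (H ⊔ L) ⊓ Lᗮ ≤ H ⊔ L) (pj_mem _ w))
    · exact sub_starProjection_mem_orthogonal w
  rw [W_inf_Uorth H L] at h1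
  exact h1

lemma contraction (hHL : H ⊓ Lᗮ = ⊥) {u : V} (hu : u ∈ (H ⊔ L) ⊓ Lᗮ) (hu0 : u ≠ 0) :
    ‖pj ((H ⊔ L) ⊓ Lᗮ) (reflection H u)‖ < ‖u‖ := by
  by_cases hmem : reflection H u ∈ (H ⊔ L) ⊓ Lᗮ
  · exfalso
    have hh : pj H u ∈ (H ⊔ L) ⊓ Lᗮ := by
      have h1 : (2:ℝ)⁻¹ • (reflection H u + u) ∈ (H ⊔ L) ⊓ Lᗮ :=
        Submodule.smul_mem _ _ (Submodule.add_mem _ hmem hu)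
      have e : (2:ℝ)⁻¹ • (reflection H u + u) = pj H u := by
        rw [reflection_apply, sub_add_cancel, two_smul, pj]
        rw [smul_add]
        rw [← two_smul ℝ]
        rw [smul_smul]
        norm_num
      rwa [e] at h1
    have hzero : pj H u = 0 := by
      have : pj H u ∈ H ⊓ Lᗮ := ⟨pj_mem H u, hh.2⟩
      rw [hHL] at this
      simpa using this
    have huH : u ∈ Hᗮ := mem_orth_of_pj_eq_zero hzero
    exact hu0 (mem_U_inf_Horth H L hu huH)
  · calc ‖pj ((H ⊔ L) ⊓ Lᗮ) (reflection H u)‖ < ‖reflection H u‖ := pj_norm_lt _ hmem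
      _ = ‖u‖ := (reflection H).norm_map u

lemma finrank_U_le_H : Module.finrank ℝ ((H ⊔ L) ⊓ Lᗮ : Submodule ℝ V) ≤ Module.finrank ℝ H := by
  let f : ((H ⊔ L) ⊓ Lᗮ : Submodule ℝ V) →ₗ[ℝ] H :=
    (orthogonalProjection H).toLinearMap.comp ((H ⊔ L) ⊓ Lᗮ : Submodule ℝ V).subtype
  have hinj : Function.Injective f := by
    rw [← LinearMap.ker_eq_bot]
    rw [Submodule.eq_bot_iff]
    rintro z hz
    have hz' : orthogonalProjection H (z : V) = 0 := hz
    have hzH : (z : V) ∈ Hᗮ := orthogonalProjectionOnto_eq_zero_iff.1 hz'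
    exact Subtype.ext (mem_U_inf_Horth H L z.2 hzH)
  exact LinearMap.finrank_le_finrank_of_injective hinj

lemma exists_ker_elt (hdim : Module.finrank ℝ H < Module.finrank ℝ L) :
    ∃ z : V, z ∈ L ∧ z ≠ 0 ∧ pj ((H ⊔ L) ⊓ Lᗮ) (pj H z) = 0 := by
  let f : L →ₗ[ℝ] ((H ⊔ L) ⊓ Lᗮ : Submodule ℝ V) :=
    (orthogonalProjection ((H ⊔ L) ⊓ Lᗮ)).toLinearMap.comp
      (H.subtype.comp ((orthogonalProjection H).toLinearMap.comp L.subtype))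
  by_cases hk : LinearMap.ker f = ⊥
  · exfalso
    have hinj : Function.Injective f := LinearMap.ker_eq_bot.1 hk
    have h1 : Module.finrank ℝ L ≤ Module.finrank ℝ ((H ⊔ L) ⊓ Lᗮ : Submodule ℝ V) :=
      LinearMap.finrank_le_finrank_of_injective hinj
    have h2 := finrank_U_le_H H L
    omega
  · obtain ⟨z, hz, hz0⟩ := Submodule.exists_mem_ne_zero_of_ne_bot hk
    refine ⟨(z : V), z.2, ?_, ?_⟩
    · intro h
      exact hz0 (Subtype.ext h)
    · have : f z = 0 := hz
      have h2 : (f z : V) = 0 := by rw [this]; rfl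
      exact h2

lemma exists_bound (hHL : H ⊓ Lᗮ = ⊥) :
    ∃ c : ℝ, 0 < c ∧ ∀ v ∈ (H ⊔ L) ⊓ Lᗮ,
      ∃ a ∈ L, pj ((H ⊔ L) ⊓ Lᗮ) (pj H a) = v ∧ ‖a‖ ≤ c * ‖v‖ := by
  let f : L →ₗ[ℝ] ((H ⊔ L) ⊓ Lᗮ : Submodule ℝ V) :=
    (orthogonalProjection ((H ⊔ L) ⊓ Lᗮ)).toLinearMap.comp
      (H.subtype.comp ((orthogonalProjection H).toLinearMap.comp L.subtype))
  have hsurj : LinearMap.range f = ⊤ := by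
    by_contra hne
    have hne' : (LinearMap.range f)ᗮ ≠ ⊥ := by
      intro h0
      exact hne (Submodule.orthogonal_eq_bot_iff.1 h0)
    obtain ⟨w, hw, hw0⟩ := Submodule.exists_mem_ne_zero_of_ne_bot hne'
    have key : ∀ z : L, ⟪(z : V), pj H (w : V)⟫ = 0 := by
      intro z
      have h1 : ⟪(f z : V), ((w : ((H ⊔ L) ⊓ Lᗮ : Submodule ℝ V)) : V)⟫ = 0 := by
        have := hw (f z) (LinearMap.mem_range_self f z)
        simpa [Submodule.coe_inner] using this
      have h2 : (f z : V) = pj ((H ⊔ L) ⊓ Lᗮ) (pj H (z : V)) := rfl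
      rw [h2] at h1
      have h3 : ⟪pj H (z : V) - pj ((H ⊔ L) ⊓ Lᗮ) (pj H (z : V)), (w : V)⟫ = 0 :=
        inner_sub_pj _ _ w.2
      have h4 : ⟪pj H (z : V), (w : V)⟫ = 0 := by
        rw [inner_sub_left] at h3
        linarith
      have h5 : ⟪pj H (z : V), (w : V)⟫ = ⟪(z : V), pj H (w : V)⟫ :=
        inner_starProjection_left_eq_right H (z : V) (w : V)
      rw [← h5]
      exact h4
    have hpjw : pj H (w : V) ∈ H ⊓ Lᗮ := by
      refine ⟨pj_mem H _, ?_⟩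
      intro ξ hξ
      exact key ⟨ξ, hξ⟩
    rw [hHL] at hpjw
    have hzero : pj H (w : V) = 0 := by simpa using hpjw
    have hwH : (w : V) ∈ Hᗮ := mem_orth_of_pj_eq_zero hzero
    exact hw0 (Subtype.ext (mem_U_inf_Horth H L w.2 hwH))
  obtain ⟨g, hg⟩ := f.exists_rightInverse_of_surjective hsurj
  let g' := LinearMap.toContinuousLinearMap g
  refine ⟨‖g'‖ + 1, by positivity, ?_⟩
  intro v hv
  set vU : ((H ⊔ L) ⊓ Lᗮ : Submodule ℝ V) := ⟨v, hv⟩ with hvU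
  refine ⟨(g vU : V), (g vU).2, ?_, ?_⟩
  · have h1 : f (g vU) = vU := by
      have := LinearMap.ext_iff.1 hg vU
      simpa using this
    have h2 : (f (g vU) : V) = pj ((H ⊔ L) ⊓ Lᗮ) (pj H ((g vU : L) : V)) := rfl
    rw [h1] at h2
    exact h2.symm
  · have hb := g'.le_opNorm vU
    have h1 : ‖g' vU‖ = ‖((g vU : L) : V)‖ := rfl
    have h2 : ‖vU‖ = ‖v‖ := rfl
    rw [h1, h2] at hb
    have : ‖g'‖ * ‖v‖ ≤ (‖g'‖ + 1) * ‖v‖ := by nlinarith [norm_nonneg v]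
    linarith

lemma ivt_adjust {a z : V} (hz : z ≠ 0) {R' : ℝ} (h1 : ‖a‖ ^ 2 ≤ R') :
    ∃ t : ℝ, ‖a + t • z‖ ^ 2 = R' := by
  have hR0 : 0 ≤ R' := le_trans (sq_nonneg _) h1
  have hz0 : 0 < ‖z‖ := norm_pos_iff.2 hz
  set t₀ := (‖a‖ + Real.sqrt R') / ‖z‖ with ht₀
  have ht₀0 : 0 ≤ t₀ := by positivity
  have hcont : ContinuousOn (fun t : ℝ => ‖a + t • z‖ ^ 2) (Set.Icc 0 t₀) := by
    apply Continuous.continuousOn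
    continuity
  have hhigh : R' ≤ ‖a + t₀ • z‖ ^ 2 := by
    have h2 : t₀ * ‖z‖ = ‖a‖ + Real.sqrt R' := by
      rw [ht₀, div_mul_cancel₀ _ (ne_of_gt hz0)]
    have h3 : ‖t₀ • z‖ ≤ ‖a + t₀ • z‖ + ‖a‖ := by
      have h := norm_sub_le (a + t₀ • z) a
      rwa [add_sub_cancel_left] at h
    have h4 : ‖t₀ • z‖ = t₀ * ‖z‖ := by
      rw [norm_smul, Real.norm_eq_abs, abs_of_nonneg ht₀0]
    have h5 : Real.sqrt R' ≤ ‖a + t₀ • z‖ := by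
      rw [h4, h2] at h3
      linarith
    calc R' = Real.sqrt R' ^ 2 := (Real.sq_sqrt hR0).symm
      _ ≤ ‖a + t₀ • z‖ ^ 2 := by nlinarith [Real.sqrt_nonneg R']
  have hmem : R' ∈ Set.Icc (‖a + (0:ℝ) • z‖ ^ 2) (‖a + t₀ • z‖ ^ 2) := by
    rw [Set.mem_Icc]
    exact ⟨by simpa using h1, hhigh⟩
  obtain ⟨t, _, ht⟩ := intermediate_value_Icc ht₀0 hcont hmem
  exact ⟨t, ht⟩

lemma pyth2 {K M : Submodule ℝ V} (hKM : K ≤ Mᗮ) (y : V) :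
    ‖pj K y‖ ^ 2 + ‖pj M y‖ ^ 2 ≤ ‖y‖ ^ 2 := by
  set q := pj K y with hq
  set m := pj M y with hm
  have hqm : ⟪q, m⟫ = 0 := by
    rw [real_inner_comm]
    exact Submodule.inner_right_of_mem_orthogonal (pj_mem M y) (hKM (pj_mem K y))
  have h1 : ⟪y - q, q⟫ = 0 := inner_sub_pj K y (pj_mem K y)
  have h2 : ⟪y - m, m⟫ = 0 := inner_sub_pj M y (pj_mem M y)
  have e1 : ⟪y, q⟫ = ‖q‖ ^ 2 := by
    rw [inner_sub_left, real_inner_self_eq_norm_sq] at h1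
    linarith
  have e2 : ⟪y, m⟫ = ‖m‖ ^ 2 := by
    rw [inner_sub_left, real_inner_self_eq_norm_sq] at h2
    linarith
  have e3 : (0:ℝ) ≤ ‖y - (q + m)‖ ^ 2 := sq_nonneg _
  have e4 : ‖y - (q + m)‖ ^ 2 = ‖y‖ ^ 2 - 2 * ⟪y, q + m⟫ + ‖q + m‖ ^ 2 :=
    norm_sub_sq_real y (q + m)
  have e5 : ‖q + m‖ ^ 2 = ‖q‖ ^ 2 + 2 * ⟪q, m⟫ + ‖m‖ ^ 2 := norm_add_sq_real q m
  have e6 : ⟪y, q + m⟫ = ⟪y, q⟫ + ⟪y, m⟫ := inner_add_right _ _ _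
  nlinarith

lemma tendsto_iterate_zero {f : V → V} (hfc : Continuous f) (U' : Submodule ℝ V)
    (hmaps : ∀ w, f w ∈ U') (hle : ∀ w, ‖f w‖ ≤ ‖w‖)
    (hlt : ∀ w ∈ U', w ≠ 0 → ‖f w‖ < ‖w‖) (v : V) :
    Tendsto (fun k => ‖f^[k] v‖) atTop (nhds 0) := by
  set u : ℕ → V := fun k => f^[k] v with hu
  have hstep : ∀ k, u (k + 1) = f (u k) := fun k => Function.iterate_succ_apply' f k v
  have hu0 : u 0 = v := rfl
  clear_value u
  have hanti : Antitone fun k => ‖u k‖ := by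
    apply antitone_nat_of_succ_le
    intro k
    rw [hstep]
    exact hle _
  have hbdd : BddBelow (Set.range fun k => ‖u k‖) := by
    refine ⟨0, ?_⟩
    rintro x ⟨k, rfl⟩
    exact norm_nonneg _
  have hlim : Tendsto (fun k => ‖u k‖) atTop (nhds (⨅ k, ‖u k‖)) :=
    tendsto_atTop_ciInf hanti hbdd
  set lam := ⨅ k, ‖u k‖ with hlam
  clear_value lam
  have hlam0 : 0 ≤ lam := hlam ▸ le_ciInf fun k => norm_nonneg _
  rcases eq_or_lt_of_le hlam0 with he | hpos
  · rw [← he] at hlim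
    rw [hu] at hlim
    simpa using hlim
  · exfalso
    have hnorm_le : ∀ k, ‖u k‖ ≤ ‖v‖ := by
      intro k
      have h : ‖u k‖ ≤ ‖u 0‖ := hanti (Nat.zero_le k)
      rwa [hu0] at h
    set x : ℕ → V := fun k => u (k + 1) with hxdef
    clear_value x
    have hbound : ∀ k, x k ∈ (U' : Set V) ∩ Metric.closedBall 0 ‖v‖ := by
      intro k
      rw [hxdef]
      constructor
      · show u (k + 1) ∈ U'
        rw [hstep]
        exact hmaps _
      · rw [Metric.mem_closedBall, dist_zero_right]
        exact hnorm_le _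
    have hbd : Bornology.IsBounded ((U' : Set V) ∩ Metric.closedBall 0 ‖v‖) :=
      (Metric.isBounded_closedBall).subset Set.inter_subset_right
    obtain ⟨z, hzmem, φ, hφ, hzt⟩ := tendsto_subseq_of_bounded hbd hbound
    have hclosed : IsClosed ((U' : Set V) ∩ Metric.closedBall 0 ‖v‖) :=
      (Submodule.closed_of_finiteDimensional U').inter Metric.isClosed_closedBall
    rw [hclosed.closure_eq] at hzmem
    have hφt : Tendsto (fun k => φ k + 1) atTop atTop :=
      (tendsto_add_atTop_nat 1).comp hφ.tendsto_atTop
    have hzt' : Tendsto (fun k => u (φ k + 1)) atTop (nhds z) := by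
      have h := hzt
      rw [hxdef] at h
      exact h
    have hnz : Tendsto (fun k => ‖u (φ k + 1)‖) atTop (nhds lam) := hlim.comp hφt
    have hnz' : Tendsto (fun k => ‖u (φ k + 1)‖) atTop (nhds ‖z‖) :=
      (continuous_norm.tendsto z).comp hzt'
    have hz_norm : ‖z‖ = lam := tendsto_nhds_unique hnz' hnz
    have hz0 : z ≠ 0 := by
      intro h
      rw [h, norm_zero] at hz_norm
      exact absurd hz_norm.symm (ne_of_gt hpos)
    have hfzt : Tendsto (fun k => u (φ k + 2)) atTop (nhds (f z)) := by
      have h1 : Tendsto (fun k => f (u (φ k + 1))) atTop (nhds (f z)) :=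
        (hfc.tendsto z).comp hzt'
      have h2 : (fun k => u (φ k + 2)) = fun k => f (u (φ k + 1)) := by
        funext k
        exact hstep (φ k + 1)
      rwa [h2]
    have hfz : Tendsto (fun k => ‖u (φ k + 2)‖) atTop (nhds ‖f z‖) :=
      (continuous_norm.tendsto _).comp hfzt
    have hfz' : Tendsto (fun k => ‖u (φ k + 2)‖) atTop (nhds lam) :=
      hlim.comp ((tendsto_add_atTop_nat 2).comp hφ.tendsto_atTop)
    have heq : ‖f z‖ = lam := tendsto_nhds_unique hfz hfz'
    have hlt' := hlt z hzmem.1 hz0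
    rw [heq, hz_norm] at hlt'
    exact lt_irrefl _ hlt'

end Geometry

section MainLemmas

variable (H L : Submodule ℝ V) {E : Set V}

lemma char_mem
    (hsub : E ⊆ Metric.sphere 0 1)
    (hrot : ∀ g : V ≃ₗᵢ[ℝ] V, (∀ x ∈ Lᗮ, g x = x) → g '' E = E)
    {x : V} (hx : x ∈ E) {y : V} (hy : ‖y‖ = 1)
    (h1 : pj ((H ⊔ L) ⊓ Lᗮ) y = pj ((H ⊔ L) ⊓ Lᗮ) x)
    (h2 : pj (H ⊔ L)ᗮ y = pj (H ⊔ L)ᗮ x) : y ∈ E := by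
  have hxnorm : ‖x‖ = 1 := by
    have h := hsub hx
    rwa [Metric.mem_sphere, dist_zero_right] at h
  have hxyL : x - y ∈ L := by
    have hd1 : x - y = (x - pj ((H ⊔ L) ⊓ Lᗮ) x) - (y - pj ((H ⊔ L) ⊓ Lᗮ) y) := by
      rw [h1]; abel
    have hd2 : x - y = (x - pj (H ⊔ L)ᗮ x) - (y - pj (H ⊔ L)ᗮ y) := by
      rw [h2]; abel
    have hmem : x - y ∈ Lᗮᗮ := by
      intro ξ hξ
      rw [Lorth_eq H L] at hξ
      obtain ⟨ξ₁, hξ₁, ξ₂, hξ₂, rfl⟩ := Submodule.mem_sup.1 hξ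
      have e1 : ⟪x - y, ξ₁⟫ = 0 := by
        rw [hd1, inner_sub_left, inner_sub_pj _ x hξ₁, inner_sub_pj _ y hξ₁, sub_zero]
      have e2 : ⟪x - y, ξ₂⟫ = 0 := by
        rw [hd2, inner_sub_left, inner_sub_pj _ x hξ₂, inner_sub_pj _ y hξ₂, sub_zero]
      rw [inner_add_left, real_inner_comm ξ₁, real_inner_comm ξ₂] at *
      rw [e1, e2, add_zero]
    rwa [Submodule.orthogonal_orthogonal] at hmem
  have hgfix : ∀ w ∈ Lᗮ, reflection ((ℝ ∙ (x - y))ᗮ) w = w := by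
    intro w hw
    apply reflection_mem_subspace_eq_self
    rw [Submodule.mem_orthogonal]
    intro ξ hξ
    obtain ⟨c, rfl⟩ := Submodule.mem_span_singleton.1 hξ
    rw [real_inner_smul_left, Submodule.inner_right_of_mem_orthogonal hxyL hw, mul_zero]
  have himg := hrot (reflection ((ℝ ∙ (x - y))ᗮ)) hgfix
  have hxy : reflection ((ℝ ∙ (x - y))ᗮ) x = y := reflection_sub (by rw [hxnorm, hy])
  rw [← himg]
  exact ⟨x, hx, hxy⟩

lemma move_lemma (hHL : H ⊓ Lᗮ = ⊥)
    (hdim : Module.finrank ℝ H < Module.finrank ℝ L)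
    (hsub : E ⊆ Metric.sphere 0 1)
    (hrefl : reflection H '' E = E)
    (hrot : ∀ g : V ≃ₗᵢ[ℝ] V, (∀ x ∈ Lᗮ, g x = x) → g '' E = E)
    {p u a : V} (hp : p ∈ (H ⊔ L)ᗮ) (hu : u ∈ (H ⊔ L) ⊓ Lᗮ) (ha : a ∈ L)
    (hcond : ‖a‖ ^ 2 + ‖u‖ ^ 2 + ‖p‖ ^ 2 ≤ 1)
    (hmem : ∃ z ∈ E, pj (H ⊔ L)ᗮ z = p ∧ pj ((H ⊔ L) ⊓ Lᗮ) z = u) :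
    ∃ z' ∈ E, pj (H ⊔ L)ᗮ z' = -p ∧
      pj ((H ⊔ L) ⊓ Lᗮ) z' =
        pj ((H ⊔ L) ⊓ Lᗮ) (pj H (a + u)) + pj ((H ⊔ L) ⊓ Lᗮ) (pj H (a + u)) - u := by
  obtain ⟨z, hzE, hzp, hzu⟩ := hmem
  -- abbreviations
  set U : Submodule ℝ V := (H ⊔ L) ⊓ Lᗮ with hUdef
  -- basic inclusions
  have hUW : U ≤ H ⊔ L := inf_le_left
  have hUL : U ≤ Lᗮ := inf_le_right
  have hWH : H ≤ H ⊔ L := le_sup_left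
  have hWL : L ≤ H ⊔ L := le_sup_right
  have hWoU : (H ⊔ L)ᗮ ≤ Uᗮ := Submodule.orthogonal_le hUW
  have hWoH : (H ⊔ L)ᗮ ≤ Hᗮ := Submodule.orthogonal_le hWH
  have hLU : L ≤ Uᗮ :=
    le_trans (Submodule.le_orthogonal_orthogonal L) (Submodule.orthogonal_le hUL)
  have hWWo : (H ⊔ L) ≤ ((H ⊔ L)ᗮ)ᗮ := Submodule.le_orthogonal_orthogonal _
  -- kernel element
  obtain ⟨z₀, hz₀L, hz₀ne, hz₀ker⟩ := exists_ker_elt H L hdim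
  -- adjust a
  obtain ⟨t, ht⟩ := ivt_adjust (a := a) hz₀ne (R' := 1 - ‖u‖ ^ 2 - ‖p‖ ^ 2) (by linarith)
  set a' : V := a + t • z₀ with ha'def
  have ha' : a' ∈ L := Submodule.add_mem L ha (Submodule.smul_mem L t hz₀L)
  -- x' := p + u + a'
  set x' : V := p + u + a' with hx'def
  -- orthogonality relations
  have hpu : ⟪p, u⟫ = 0 := by
    rw [real_inner_comm]
    exact Submodule.inner_right_of_mem_orthogonal (hUW hu) hp
  have hpa : ⟪p, a'⟫ = 0 := by
    rw [real_inner_comm]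
    exact Submodule.inner_right_of_mem_orthogonal (hWL ha') hp
  have hua : ⟪u, a'⟫ = 0 := by
    rw [real_inner_comm]
    exact Submodule.inner_right_of_mem_orthogonal ha' (hUL hu)
  have hnorm1 : ‖x'‖ = 1 := by
    have e1 : ‖x'‖ ^ 2 = ‖p‖ ^ 2 + ‖u‖ ^ 2 + ‖a'‖ ^ 2 := by
      rw [hx'def]
      have f1 : ‖p + u + a'‖ ^ 2 = ‖p + u‖ ^ 2 + 2 * ⟪p + u, a'⟫ + ‖a'‖ ^ 2 :=
        norm_add_sq_real _ _
      have f2 : ‖p + u‖ ^ 2 = ‖p‖ ^ 2 + 2 * ⟪p, u⟫ + ‖u‖ ^ 2 := norm_add_sq_real _ _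
      have f3 : ⟪p + u, a'⟫ = ⟪p, a'⟫ + ⟪u, a'⟫ := inner_add_left _ _ _
      rw [f1, f2, f3, hpu, hpa, hua]
      ring
    have e2 : ‖x'‖ ^ 2 = 1 := by rw [e1, ht]; ring
    nlinarith [norm_nonneg x']
  -- projections of x'
  have hpjWo : pj (H ⊔ L)ᗮ x' = p := by
    rw [hx'def, pj_add, pj_add, pj_of_mem hp, pj_of_mem_orth (hWWo (hUW hu)),
      pj_of_mem_orth (hWWo (hWL ha'))]
    abel
  have hpjU : pj U x' = u := by
    rw [hx'def, pj_add, pj_add, pj_of_mem_orth (hWoU hp), pj_of_mem (hu),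
      pj_of_mem_orth (hLU ha')]
    abel
  -- x' ∈ E
  have hx'E : x' ∈ E :=
    char_mem H L hsub hrot hzE hnorm1 (by rw [← hUdef, hpjU, hzu]) (by rw [hpjWo, hzp])
  -- y' := reflection H x' ∈ E
  have hy'E : reflection H x' ∈ E := by
    rw [← hrefl]
    exact ⟨x', hx'E, rfl⟩
  refine ⟨reflection H x', hy'E, ?_, ?_⟩
  · -- pj Wᗮ (reflection H x') = -p
    have e : reflection H x' = pj H x' + pj H x' - x' := by
      rw [reflection_apply, two_smul]
      rfl
    rw [e, pj_sub, pj_add, pj_of_mem_orth (hWWo (hWH (pj_mem H x'))), hpjWo]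
    abel
  · -- pj U (reflection H x') = pj U (pj H (a + u)) + pj U (pj H (a + u)) - u
    have e : reflection H x' = pj H x' + pj H x' - x' := by
      rw [reflection_apply, two_smul]
      rfl
    have hpjHx' : pj H x' = pj H (a + u) + t • pj H z₀ := by
      rw [hx'def, ha'def, pj_add, pj_add, pj_add, pj_of_mem_orth (hWoH hp), pj_smul,
        pj_add H a u]
      abel
    rw [e, pj_sub, pj_add, hpjHx', hpjU]
    rw [pj_add, pj_smul, hz₀ker, smul_zero, add_zero]

set_option maxHeartbeats 2000000 in
lemma fiber_full (hHL : H ⊓ Lᗮ = ⊥)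
    (hdim : Module.finrank ℝ H < Module.finrank ℝ L)
    (hcl : IsClosed E)
    (hsub : E ⊆ Metric.sphere 0 1)
    (hrefl : reflection H '' E = E)
    (hrot : ∀ g : V ≃ₗᵢ[ℝ] V, (∀ x ∈ Lᗮ, g x = x) → g '' E = E)
    {p : V} (hp : p ∈ (H ⊔ L)ᗮ)
    (hne : ∃ x₀ ∈ E, pj (H ⊔ L)ᗮ x₀ = p)
    {v : V} (hv : v ∈ (H ⊔ L) ⊓ Lᗮ) (hvn : ‖v‖ ^ 2 + ‖p‖ ^ 2 ≤ 1) :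
    ∃ z ∈ E, pj (H ⊔ L)ᗮ z = p ∧ pj ((H ⊔ L) ⊓ Lᗮ) z = v := by
  set U : Submodule ℝ V := (H ⊔ L) ⊓ Lᗮ with hUdef
  have hUW : U ≤ H ⊔ L := inf_le_left
  have hUL : U ≤ Lᗮ := inf_le_right
  have hWH : H ≤ H ⊔ L := le_sup_left
  have hWWo : (H ⊔ L) ≤ ((H ⊔ L)ᗮ)ᗮ := Submodule.le_orthogonal_orthogonal _
  have hpneg : -p ∈ (H ⊔ L)ᗮ := Submodule.neg_mem _ hp
  -- the two fibers
  set Dp : Set V := {w | ∃ z ∈ E, pj (H ⊔ L)ᗮ z = p ∧ pj U z = w} with hDpdef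
  set Dm : Set V := {w | ∃ z ∈ E, pj (H ⊔ L)ᗮ z = -p ∧ pj U z = w} with hDmdef
  -- the contraction map
  set Sfun : V → V := fun w => pj U (reflection H w) with hSdef
  have hS_mem : ∀ w : V, Sfun w ∈ U := fun w => pj_mem U _
  have hS_le : ∀ w : V, ‖Sfun w‖ ≤ ‖w‖ := by
    intro w
    calc ‖Sfun w‖ ≤ ‖reflection H w‖ := pj_norm_le U _
      _ = ‖w‖ := (reflection H).norm_map w
  have hS_lt : ∀ w ∈ U, w ≠ 0 → ‖Sfun w‖ < ‖w‖ := fun w hw hw0 => contraction H L hHL hw hw0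
  have hS_cont : Continuous Sfun :=
    ((orthogonalProjection U).continuous.subtype_val).comp (reflection H).continuous
  have hrefl_eq : ∀ w : V, reflection H w = pj H w + pj H w - w := by
    intro w
    rw [reflection_apply, two_smul]
    rfl
  have hSform : ∀ w ∈ U, Sfun w = pj U (pj H w) + pj U (pj H w) - w := by
    intro w hw
    show pj U (reflection H w) = _
    rw [hrefl_eq w, pj_sub, pj_add, pj_of_mem hw]
  -- one-step moves
  have stepP : ∀ u ∈ U, ‖u‖ ^ 2 + ‖p‖ ^ 2 ≤ 1 → u ∈ Dp → Sfun u ∈ Dm := by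
    intro u hu hun hDp
    have hmv := move_lemma H L hHL hdim hsub hrefl hrot hp hu (Submodule.zero_mem L)
      (by simpa using hun) hDp
    rw [zero_add] at hmv
    rw [hSform u hu]
    exact hmv
  have stepM : ∀ u ∈ U, ‖u‖ ^ 2 + ‖p‖ ^ 2 ≤ 1 → u ∈ Dm → Sfun u ∈ Dp := by
    intro u hu hun hDm
    have hmv := move_lemma H L hHL hdim hsub hrefl hrot hpneg hu (Submodule.zero_mem L)
      (by rw [norm_neg]; simpa using hun) hDm
    rw [zero_add, neg_neg] at hmv
    rw [hSform u hu]
    exact hmv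
  -- climbing moves
  have climb_aux : ∀ w ∈ U, (reflection H w - Sfun w) ∈ L ∧
      (reflection H w - Sfun w) + Sfun w = reflection H w ∧
      ‖reflection H w - Sfun w‖ ^ 2 + ‖Sfun w‖ ^ 2 = ‖w‖ ^ 2 ∧
      pj U (pj H ((reflection H w - Sfun w) + Sfun w)) +
        pj U (pj H ((reflection H w - Sfun w) + Sfun w)) - Sfun w = w := by
    intro w hw
    have hRW : reflection H w ∈ H ⊔ L := by
      rw [hrefl_eq w]
      exact Submodule.sub_mem _ (Submodule.add_mem _ (hWH (pj_mem H w)) (hWH (pj_mem H w)))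
        (hUW hw)
    have haL : (reflection H w - Sfun w) ∈ L := decompW H L hRW
    have hsum : (reflection H w - Sfun w) + Sfun w = reflection H w := sub_add_cancel _ _
    have hperp : ⟪reflection H w - Sfun w, Sfun w⟫ = 0 :=
      Submodule.inner_right_of_mem_orthogonal haL (hUL (hS_mem w))
    have hpyth : ‖reflection H w - Sfun w‖ ^ 2 + ‖Sfun w‖ ^ 2 = ‖w‖ ^ 2 := by
      have f1 : ‖(reflection H w - Sfun w) + Sfun w‖ ^ 2 =
          ‖reflection H w - Sfun w‖ ^ 2 + 2 * ⟪reflection H w - Sfun w, Sfun w⟫ +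
            ‖Sfun w‖ ^ 2 := norm_add_sq_real _ _
      rw [hsum, hperp, (reflection H).norm_map w] at f1
      linarith
    have hval : pj U (pj H ((reflection H w - Sfun w) + Sfun w)) +
        pj U (pj H ((reflection H w - Sfun w) + Sfun w)) - Sfun w = w := by
      rw [hsum]
      have e1 : pj H (reflection H w) + pj H (reflection H w) - reflection H w = w := by
        have e2 := hrefl_eq (reflection H w)
        rw [reflection_reflection] at e2
        exact e2.symm
      have e3 := congrArg (pj U) e1
      rw [pj_sub, pj_add, pj_of_mem hw] at e3
      have e4 : pj U (reflection H w) = Sfun w := rfl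
      rw [e4] at e3
      exact e3
    exact ⟨haL, hsum, hpyth, hval⟩
  have climb1 : ∀ w ∈ U, ‖w‖ ^ 2 + ‖p‖ ^ 2 ≤ 1 → Sfun w ∈ Dm → w ∈ Dp := by
    intro w hw hwn hDm
    obtain ⟨haL, hsum, hpyth, hval⟩ := climb_aux w hw
    have hmv := move_lemma H L hHL hdim hsub hrefl hrot hpneg (hS_mem w) haL
      (by rw [norm_neg]; linarith) hDm
    rw [neg_neg, hval] at hmv
    exact hmv
  have climb2 : ∀ w ∈ U, ‖w‖ ^ 2 + ‖p‖ ^ 2 ≤ 1 → Sfun w ∈ Dp → w ∈ Dm := by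
    intro w hw hwn hDp
    obtain ⟨haL, hsum, hpyth, hval⟩ := climb_aux w hw
    have hmv := move_lemma H L hHL hdim hsub hrefl hrot hp (hS_mem w) haL
      (by linarith) hDp
    rw [hval] at hmv
    exact hmv
  -- seed point u₀ and its iterates
  obtain ⟨x₀, hx₀E, hx₀p⟩ := hne
  have hx₀norm : ‖x₀‖ = 1 := by
    have h := hsub hx₀E
    rwa [Metric.mem_sphere, dist_zero_right] at h
  set u₀ : V := pj U x₀ with hu₀def
  have hu₀U : u₀ ∈ U := pj_mem U x₀
  have hu₀Dp : u₀ ∈ Dp := ⟨x₀, hx₀E, hx₀p, rfl⟩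
  have hu₀n : ‖u₀‖ ^ 2 + ‖p‖ ^ 2 ≤ 1 := by
    have h := pyth2 (K := U) (M := (H ⊔ L)ᗮ) (le_trans hUW hWWo) x₀
    rw [hx₀norm, hx₀p] at h
    simpa using h
  have hiter_mem : ∀ k : ℕ, ∀ w ∈ U, Sfun^[k] w ∈ U := by
    intro k
    induction k with
    | zero => intro w hw; simpa using hw
    | succ k ih =>
      intro w hw
      rw [Function.iterate_succ_apply]
      exact ih _ (hS_mem w)
  have hiter_norm : ∀ k : ℕ, ∀ w : V, ‖Sfun^[k] w‖ ≤ ‖w‖ := by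
    intro k
    induction k with
    | zero => intro w; simp
    | succ k ih =>
      intro w
      rw [Function.iterate_succ_apply]
      exact le_trans (ih _) (hS_le w)
  -- closedness of the fibers
  have hcont1 : Continuous fun z : V => pj U z :=
    (orthogonalProjection U).continuous.subtype_val
  have hcont2 : Continuous fun z : V => pj (H ⊔ L)ᗮ z :=
    (orthogonalProjection (H ⊔ L)ᗮ).continuous.subtype_val
  have hEcomp : IsCompact E := (isCompact_sphere (0 : V) 1).of_isClosed_subset hcl hsub
  have hDp_closed : IsClosed Dp := by
    have hDp_eq : Dp = (fun z : V => pj U z) '' (E ∩ (fun z : V => pj (H ⊔ L)ᗮ z) ⁻¹' {p}) := by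
      ext w
      constructor
      · rintro ⟨z, hz1, hz2, hz3⟩
        exact ⟨z, ⟨hz1, hz2⟩, hz3⟩
      · rintro ⟨z, ⟨hz1, hz2⟩, hz3⟩
        exact ⟨z, hz1, hz2, hz3⟩
    rw [hDp_eq]
    exact ((hEcomp.inter_right (isClosed_singleton.preimage hcont2)).image hcont1).isClosed
  have hDm_closed : IsClosed Dm := by
    have hDm_eq : Dm = (fun z : V => pj U z) '' (E ∩ (fun z : V => pj (H ⊔ L)ᗮ z) ⁻¹' {-p}) := by
      ext w
      constructor
      · rintro ⟨z, hz1, hz2, hz3⟩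
        exact ⟨z, ⟨hz1, hz2⟩, hz3⟩
      · rintro ⟨z, ⟨hz1, hz2⟩, hz3⟩
        exact ⟨z, hz1, hz2, hz3⟩
    rw [hDm_eq]
    exact ((hEcomp.inter_right (isClosed_singleton.preimage hcont2)).image hcont1).isClosed
  -- parity of iterates
  have hpar : ∀ k : ℕ, Sfun^[2 * k] u₀ ∈ Dp ∧ Sfun^[2 * k + 1] u₀ ∈ Dm := by
    intro k
    induction k with
    | zero =>
      constructor
      · simpa using hu₀Dp
      · have h1 : Sfun^[2 * 0 + 1] u₀ = Sfun u₀ := by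
          norm_num
        rw [h1]
        exact stepP u₀ hu₀U hu₀n hu₀Dp
    | succ k ih =>
      have hmem1 : Sfun^[2 * k + 1] u₀ ∈ U := hiter_mem _ _ hu₀U
      have hn1 : ‖Sfun^[2 * k + 1] u₀‖ ^ 2 + ‖p‖ ^ 2 ≤ 1 := by
        have := hiter_norm (2 * k + 1) u₀
        nlinarith [norm_nonneg (Sfun^[2 * k + 1] u₀), norm_nonneg u₀]
      have h2 : Sfun^[2 * (k + 1)] u₀ = Sfun (Sfun^[2 * k + 1] u₀) := by
        have : 2 * (k + 1) = (2 * k + 1) + 1 := by ring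
        rw [this, Function.iterate_succ_apply']
      have hDp2 : Sfun^[2 * (k + 1)] u₀ ∈ Dp := by
        rw [h2]
        exact stepM _ hmem1 hn1 ih.2
      refine ⟨hDp2, ?_⟩
      have hmem2 : Sfun^[2 * (k + 1)] u₀ ∈ U := hiter_mem _ _ hu₀U
      have hn2 : ‖Sfun^[2 * (k + 1)] u₀‖ ^ 2 + ‖p‖ ^ 2 ≤ 1 := by
        have := hiter_norm (2 * (k + 1)) u₀
        nlinarith [norm_nonneg (Sfun^[2 * (k + 1)] u₀), norm_nonneg u₀]
      have h3 : Sfun^[2 * (k + 1) + 1] u₀ = Sfun (Sfun^[2 * (k + 1)] u₀) :=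
        Function.iterate_succ_apply' _ _ _
      rw [h3]
      exact stepP _ hmem2 hn2 hDp2
  -- 0 belongs to both fibers
  have hvec : Tendsto (fun k => Sfun^[k] u₀) atTop (nhds 0) := by
    rw [tendsto_zero_iff_norm_tendsto_zero]
    exact tendsto_iterate_zero hS_cont U hS_mem hS_le hS_lt u₀
  have hdouble : Tendsto (fun k : ℕ => 2 * k) atTop atTop :=
    tendsto_atTop_mono (f := fun k : ℕ => k) (fun k => by show k ≤ 2 * k; omega) tendsto_id
  have hdouble1 : Tendsto (fun k : ℕ => 2 * k + 1) atTop atTop :=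
    tendsto_atTop_mono (f := fun k : ℕ => k) (fun k => by show k ≤ 2 * k + 1; omega) tendsto_id
  have h0p : (0 : V) ∈ Dp :=
    hDp_closed.mem_of_tendsto (hvec.comp hdouble)
      (Filter.Eventually.of_forall fun k => (hpar k).1)
  have h0m : (0 : V) ∈ Dm :=
    hDm_closed.mem_of_tendsto (hvec.comp hdouble1)
      (Filter.Eventually.of_forall fun k => (hpar k).2)
  -- seeding small vectors
  obtain ⟨c, hc, hcprop⟩ := exists_bound H L hHL
  have seedP : ∀ w ∈ U, (c * ‖w‖) ^ 2 / 4 + ‖p‖ ^ 2 ≤ 1 → w ∈ Dp ∧ w ∈ Dm := by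
    intro w hw hwsmall
    obtain ⟨a, haL, hapj, hanorm⟩ := hcprop ((2⁻¹ : ℝ) • w) (Submodule.smul_mem U _ hw)
    have hanorm' : ‖a‖ ≤ c * (2⁻¹ * ‖w‖) := by
      have e : ‖(2⁻¹ : ℝ) • w‖ = 2⁻¹ * ‖w‖ := by
        rw [norm_smul, Real.norm_eq_abs]
        norm_num
      rwa [e] at hanorm
    have hcond : ‖a‖ ^ 2 + ‖(0 : V)‖ ^ 2 + ‖p‖ ^ 2 ≤ 1 := by
      have h1 : 0 ≤ ‖a‖ := norm_nonneg a
      have h2 : 0 ≤ c * (2⁻¹ * ‖w‖) := le_trans h1 hanorm'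
      have h3 : ‖a‖ ^ 2 ≤ (c * (2⁻¹ * ‖w‖)) ^ 2 := by nlinarith
      have h4 : (c * (2⁻¹ * ‖w‖)) ^ 2 = (c * ‖w‖) ^ 2 / 4 := by ring
      simp only [norm_zero]
      nlinarith
    have hval : pj U (pj H (a + 0)) + pj U (pj H (a + 0)) - 0 = w := by
      rw [add_zero, hapj, sub_zero, ← add_smul]
      norm_num
    constructor
    · -- w ∈ Dp from 0 ∈ Dm
      have hmv := move_lemma H L hHL hdim hsub hrefl hrot hpneg (Submodule.zero_mem U) haL
        (by rw [norm_neg]; exact hcond) h0m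
      rw [neg_neg, hval] at hmv
      exact hmv
    · -- w ∈ Dm from 0 ∈ Dp
      have hmv := move_lemma H L hHL hdim hsub hrefl hrot hp (Submodule.zero_mem U) haL
        hcond h0p
      rw [hval] at hmv
      exact hmv
  -- downward induction
  have claim : ∀ k : ℕ, ∀ w ∈ U, ‖w‖ ^ 2 + ‖p‖ ^ 2 ≤ 1 →
      (c * ‖Sfun^[k] w‖) ^ 2 / 4 + ‖p‖ ^ 2 ≤ 1 → w ∈ Dp ∧ w ∈ Dm := by
    intro k
    induction k with
    | zero =>
      intro w hw hwn hsmall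
      simp only [Function.iterate_zero_apply] at hsmall
      exact seedP w hw hsmall
    | succ k ih =>
      intro w hw hwn hsmall
      rw [Function.iterate_succ_apply] at hsmall
      have hSn : ‖Sfun w‖ ^ 2 + ‖p‖ ^ 2 ≤ 1 := by
        have := hS_le w
        nlinarith [norm_nonneg (Sfun w), norm_nonneg w]
      obtain ⟨hDp', hDm'⟩ := ih (Sfun w) (hS_mem w) hSn hsmall
      exact ⟨climb1 w hw hwn hDm', climb2 w hw hwn hDp'⟩
  -- conclude for the target v
  have hfinal : v ∈ Dp := by
    rcases lt_or_ge (‖p‖ ^ 2) 1 with hplt | hpge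
    · -- find a good N via the tendsto lemma
      have hT : Tendsto (fun k => ‖Sfun^[k] v‖) atTop (nhds 0) :=
        tendsto_iterate_zero hS_cont U hS_mem hS_le hS_lt v
      set δ : ℝ := 2 * Real.sqrt (1 - ‖p‖ ^ 2) / c with hδdef
      have hδpos : 0 < δ := by
        have h1 : 0 < Real.sqrt (1 - ‖p‖ ^ 2) := Real.sqrt_pos.2 (by linarith)
        positivity
      have hev : ∀ᶠ k in atTop, ‖Sfun^[k] v‖ < δ :=
        hT.eventually (gt_mem_nhds hδpos)
      obtain ⟨N, hN⟩ := hev.exists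
      have hsmall : (c * ‖Sfun^[N] v‖) ^ 2 / 4 + ‖p‖ ^ 2 ≤ 1 := by
        have h1 : 0 ≤ ‖Sfun^[N] v‖ := norm_nonneg _
        have h2 : c * ‖Sfun^[N] v‖ < c * δ := by
          exact mul_lt_mul_of_pos_left hN hc
        have h3 : c * δ = 2 * Real.sqrt (1 - ‖p‖ ^ 2) := by
          rw [hδdef]
          field_simp
        have h4 : Real.sqrt (1 - ‖p‖ ^ 2) ^ 2 = 1 - ‖p‖ ^ 2 :=
          Real.sq_sqrt (by linarith)
        nlinarith [Real.sqrt_nonneg (1 - ‖p‖ ^ 2), mul_nonneg (le_of_lt hc) h1]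
      exact (claim N v hv hvn hsmall).1
    · -- degenerate case : ‖p‖ = 1 forces v = 0
      have hv0 : v = 0 := by
        have h1 : ‖v‖ ^ 2 ≤ 0 := by linarith
        have h2 : ‖v‖ = 0 := by nlinarith [norm_nonneg v, sq_nonneg ‖v‖]
        exact norm_eq_zero.1 h2
      rw [hv0]
      exact h0p
  exact hfinal

end MainLemmas

end SymmExtAux

/-- Symmetry extension lemma (Lemma 3.6): if `H ∩ L^⊥ = {0}`, `dim H < dim L`, and
`E ⊆ Sⁿ⁻¹` is nonempty, closed, invariant under the reflection `R_H` and under every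
orthogonal transformation fixing `L^⊥` pointwise, then `E` is invariant under every
orthogonal transformation fixing `(H + L)^⊥` pointwise. -/
theorem symmetry_extension_lemma (n : ℕ)
    (H L : Submodule ℝ (EuclideanSpace ℝ (Fin n))) (h : H ⊓ Lᗮ = ⊥)
    (hdim : Module.finrank ℝ H < Module.finrank ℝ L)
    (E : Set (EuclideanSpace ℝ (Fin n))) (hne : E.Nonempty) (hcl : IsClosed E)
    (hsub : E ⊆ Metric.sphere 0 1)
    (hrefl : reflection H '' E = E)
    (hrot : ∀ g : EuclideanSpace ℝ (Fin n) ≃ₗᵢ[ℝ] EuclideanSpace ℝ (Fin n),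
      (∀ x ∈ Lᗮ, g x = x) → g '' E = E) :
    ∀ g : EuclideanSpace ℝ (Fin n) ≃ₗᵢ[ℝ] EuclideanSpace ℝ (Fin n),
      (∀ x ∈ (H ⊔ L)ᗮ, g x = x) → g '' E = E := by
  have key : ∀ g : EuclideanSpace ℝ (Fin n) ≃ₗᵢ[ℝ] EuclideanSpace ℝ (Fin n),
      (∀ x ∈ (H ⊔ L)ᗮ, g x = x) → ∀ x ∈ E, g x ∈ E := by
    intro g hg x hx
    have hxnorm : ‖x‖ = 1 := by
      have h2 := hsub hx
      rwa [Metric.mem_sphere, dist_zero_right] at h2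
    have hp : pj (H ⊔ L)ᗮ x ∈ (H ⊔ L)ᗮ := pj_mem _ x
    have hgx_proj : pj (H ⊔ L)ᗮ (g x) = pj (H ⊔ L)ᗮ x := by
      apply pj_eq_of hp
      intro w hw
      have e1 : @inner ℝ _ _ (g x) w = @inner ℝ _ _ x w := by
        conv_lhs => rw [← hg w hw]
        exact g.inner_map_map x w
      have e2 : @inner ℝ _ _ (x - pj (H ⊔ L)ᗮ x) w = 0 := inner_sub_pj _ x hw
      rw [inner_sub_left] at e2 ⊢
      rw [e1]
      linarith
    have hgnorm : ‖g x‖ = 1 := by rw [g.norm_map, hxnorm]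
    have hUWo : ((H ⊔ L) ⊓ Lᗮ) ≤ ((H ⊔ L)ᗮ)ᗮ :=
      le_trans inf_le_left (Submodule.le_orthogonal_orthogonal _)
    have hvcond : ‖pj ((H ⊔ L) ⊓ Lᗮ) (g x)‖ ^ 2 + ‖pj (H ⊔ L)ᗮ x‖ ^ 2 ≤ 1 := by
      have h3 := pyth2 hUWo (g x)
      rw [hgx_proj, hgnorm] at h3
      simpa using h3
    obtain ⟨z, hzE, hzp, hzv⟩ := fiber_full H L h hdim hcl hsub hrefl hrot hp
      ⟨x, hx, rfl⟩ (pj_mem _ (g x)) hvcond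
    exact char_mem H L hsub hrot hzE hgnorm hzv.symm (by rw [hgx_proj, hzp])
  intro g hg
  apply Set.Subset.antisymm
  · rintro y ⟨x, hx, rfl⟩
    exact key g hg x hx
  · intro x hx
    have hsymm : ∀ w ∈ (H ⊔ L)ᗮ, g.symm w = w := by
      intro w hw
      conv_lhs => rw [← hg w hw]
      exact g.symm_apply_apply w
    exact ⟨g.symm x, key g.symm hsymm x hx, g.apply_symm_apply x⟩
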